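/- Let P be a poset, let D(P) be the complete lattice of closed subsets of P (subsets A with L(U(A)) = A) ordered by inclusion, with join A ∨ B = L(U(A ∪ B)) and meet A ∧ B = A ∩ B, and let D_0(P) be the sublattice of D(P) generated by the principal down-sets {L({x}) | x ∈ P}. If D_0(P) is a modular lattice (for all A, B, C ∈ D_0(P) with A ⊆ C, (A ∨ B) ∩ C = A ∨ (B ∩ C)), then P is strongly modular: for all x, y, z ∈ P, L(U(x,y) ∪ U(x,z)) = L(U({x} ∪ L({y} ∪ U(x,z)))) and L(U(L(x,z) ∪ {y}) ∪ {z}) = L(U(L(x,z) ∪ L(y,z))). -/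
import Mathlib

/-- upper bounds of the principal down-set of `x` are the upper bounds of `x`. -/
lemma ULsing {P : Type*} [PartialOrder P] (x : P) :
    upperBounds (lowerBounds ({x} : Set P)) = upperBounds {x} := by
  ext a
  constructor
  · intro ha c hc
    rcases hc with rfl
    exact ha (fun c hc => le_of_eq hc.symm)
  · intro ha b hb
    exact le_trans (hb rfl) (ha rfl)

lemma Upair {P : Type*} [PartialOrder P] (x y : P) :
    upperBounds ({x, y} : Set P) =
      upperBounds (lowerBounds {x} ∪ lowerBounds {y}) := by
  rw [Set.insert_eq, upperBounds_union, upperBounds_union, ULsing, ULsing]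

lemma Usl {P : Type*} [PartialOrder P] (x : P) (S : Set P) :
    upperBounds (({x} : Set P) ∪ S) = upperBounds (lowerBounds {x} ∪ S) := by
  rw [upperBounds_union, upperBounds_union, ULsing]

lemma Usr {P : Type*} [PartialOrder P] (y : P) (S : Set P) :
    upperBounds (S ∪ ({y} : Set P)) = upperBounds (S ∪ lowerBounds {y}) := by
  rw [upperBounds_union, upperBounds_union, ULsing]

lemma Lpair {P : Type*} [PartialOrder P] (x y : P) :
    lowerBounds ({x, y} : Set P) = lowerBounds {x} ∩ lowerBounds {y} := by
  rw [Set.insert_eq, lowerBounds_union]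

/-- The members of the sublattice `D₀(P)` of the Dedekind–MacNeille completion
of `P` generated by the principal down-sets `L({x})`, `x ∈ P`: closed under
the join `A ∨ B = L(U(A ∪ B))` and the meet `A ∧ B = A ∩ B` of the
completion. -/
inductive genD0 {P : Type*} [PartialOrder P] : Set P → Prop
  | principal (x : P) : genD0 (lowerBounds {x})
  | join {A B : Set P} : genD0 A → genD0 B → genD0 (lowerBounds (upperBounds (A ∪ B)))
  | meet {A B : Set P} : genD0 A → genD0 B → genD0 (A ∩ B)

/-- If the sublattice `D₀(P)` of the Dedekind–MacNeille
completion generated by the principal down-sets is modular, then `P` is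
strongly modular. -/
theorem stmt_17 {P : Type*} [PartialOrder P]
    (hmod : ∀ A B C : Set P, genD0 A → genD0 B → genD0 C → A ⊆ C →
      lowerBounds (upperBounds (A ∪ B)) ∩ C = lowerBounds (upperBounds (A ∪ (B ∩ C)))) :
    (∀ x y z : P,
      lowerBounds (upperBounds {x, y} ∪ upperBounds {x, z}) =
        lowerBounds (upperBounds ({x} ∪ lowerBounds ({y} ∪ upperBounds {x, z})))) ∧
    (∀ x y z : P,
      lowerBounds (upperBounds (lowerBounds {x, z} ∪ {y}) ∪ {z}) =
        lowerBounds (upperBounds (lowerBounds {x, z} ∪ lowerBounds {y, z}))) := by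
  constructor
  · intro x y z
    have hsub : lowerBounds ({x} : Set P) ⊆
        lowerBounds (upperBounds (lowerBounds {x} ∪ lowerBounds {z})) :=
      fun a ha c hc => hc (Set.mem_union_left _ ha)
    have h := hmod (lowerBounds {x}) (lowerBounds {y})
      (lowerBounds (upperBounds (lowerBounds {x} ∪ lowerBounds {z})))
      (.principal x) (.principal y) (.join (.principal x) (.principal z)) hsub
    rw [Upair x y, Upair x z, lowerBounds_union, lowerBounds_union,
      Usl x]
    exact h
  · intro x y z
    have h := hmod (lowerBounds {x} ∩ lowerBounds {z}) (lowerBounds {y})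
      (lowerBounds {z}) (.meet (.principal x) (.principal z)) (.principal y)
      (.principal z) Set.inter_subset_right
    rw [Lpair x z, Lpair y z, lowerBounds_union,
      Usr y]
    exact h
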